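/- (Lemma of Brinks–Landwehr along characteristics.) Fix a birth time c ∈ ℝ. Let D : ℝ × ℝ → ℝ be continuously differentiable (D(a,δ) represents C(c+a, a, δ), the diseased of age a with duration δ in the cohort born at c), let m1 : ℝ × ℝ → ℝ be continuous (m1(a,δ) representing m1(c+a, a, δ)), and let i, S : ℝ → ℝ be continuous (values along the cohort). Assume for all a ≥ 0 and 0 ≤ δ ≤ a that ∂_a D(a,δ) + ∂_δ D(a,δ) = -m1(a,δ) · D(a,δ), and D(a,0) = i(a)·S(a). Define C*(a) := ∫_0^a D(a,δ) dδ. Then for every a > 0, C* is differentiable at a with (C*)'(a) = i(a)·S(a) - ∫_0^a m1(a,δ)·D(a,δ) dδ; in particular, if C*(a) > 0 and m1*(a) := (∫_0^a m1(a,δ)·D(a,δ) dδ) / (∫_0^a D(a,δ) dδ), then (C*)'(a) = -m1*(a)·C*(a) + i(a)·S(a). -/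

import Mathlib

open intervalIntegral Metric Set Asymptotics MeasureTheory

/-- Lemma of Brinks–Landwehr along characteristics: the total number of diseased
`C*(a) = ∫_0^a D(a,δ) dδ` satisfies `(C*)'(a) = i(a)·S(a) - ∫_0^a m1·D dδ`,
hence with the duration-averaged mortality `m1*`,
`(C*)'(a) = -m1*(a)·C*(a) + i(a)·S(a)`. -/
theorem brinks_landwehr_lemma
    (c : ℝ) (D : ℝ × ℝ → ℝ) (hD : ContDiff ℝ 1 D)
    (m1 : ℝ × ℝ → ℝ) (hm1 : Continuous m1)
    (i S : ℝ → ℝ) (hi : Continuous i) (hS : Continuous S)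
    (hpde : ∀ a δ : ℝ, 0 ≤ a → 0 ≤ δ → δ ≤ a →
      fderiv ℝ D (a, δ) (1, 0) + fderiv ℝ D (a, δ) (0, 1) = -m1 (a, δ) * D (a, δ))
    (hinit : ∀ a : ℝ, D (a, 0) = i a * S a) :
    ∀ a : ℝ, 0 < a →
      HasDerivAt (fun x => ∫ δ in (0:ℝ)..x, D (x, δ))
        (i a * S a - ∫ δ in (0:ℝ)..a, m1 (a, δ) * D (a, δ)) a ∧
      (0 < (∫ δ in (0:ℝ)..a, D (a, δ)) →
        i a * S a - (∫ δ in (0:ℝ)..a, m1 (a, δ) * D (a, δ)) =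
          -((∫ δ in (0:ℝ)..a, m1 (a, δ) * D (a, δ)) /
              (∫ δ in (0:ℝ)..a, D (a, δ))) * (∫ δ in (0:ℝ)..a, D (a, δ))
            + i a * S a) := by
  intro a ha
  refine ⟨?_, ?_⟩
  swap
  · intro hpos
    rw [neg_mul, div_mul_cancel₀ _ (ne_of_gt hpos)]
    ring
  -- notation
  set E : ℝ → ℝ → ℝ := fun x s => D (x, x - s) with hE
  set F' : ℝ → ℝ → ℝ := fun x s => fderiv ℝ D (x, x - s) (1, 1) with hF'
  -- continuity of E x and of F'
  have hmap : ∀ x : ℝ, Continuous fun s : ℝ => ((x, x - s) : ℝ × ℝ) := fun x =>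
    continuous_const.prodMk (continuous_const.sub continuous_id)
  have hEcont : ∀ x : ℝ, Continuous fun s => E x s := fun x =>
    hD.continuous.comp (hmap x)
  have hEderiv : ∀ x s : ℝ, HasDerivAt (fun u => E u s) (F' x s) x := by
    intro x s
    have hφ : HasDerivAt (fun u : ℝ => ((u, u - s) : ℝ × ℝ)) ((1:ℝ), (1:ℝ)) x :=
      (hasDerivAt_id x).prodMk ((hasDerivAt_id x).sub_const s)
    have hd := (hD.differentiable one_ne_zero (x, x - s)).hasFDerivAt
    exact hd.comp_hasDerivAt x hφ
  -- compact set and bound on fderiv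
  set K : Set (ℝ × ℝ) := closedBall a 1 ×ˢ closedBall 0 (2 * |a| + 2) with hKdef
  have hKcomp : IsCompact K := (isCompact_closedBall _ _).prod (isCompact_closedBall _ _)
  have hKconv : Convex ℝ K := (convex_closedBall _ _).prod (convex_closedBall _ _)
  obtain ⟨C, hC⟩ := hKcomp.exists_bound_of_continuousOn
    ((hD.continuous_fderiv one_ne_zero).continuousOn)
  have hC0 : 0 ≤ C := by
    have hmem : ((a, 0) : ℝ × ℝ) ∈ K := by
      constructor <;> simp [Metric.mem_closedBall, Real.dist_eq] <;> positivity
    exact le_trans (norm_nonneg _) (hC _ hmem)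
  have hmemK : ∀ x t : ℝ, |x - a| ≤ 1 → |t| ≤ |a| + 1 → ((x, x - t) : ℝ × ℝ) ∈ K := by
    intro x t hx ht
    have h1 : |x - t| ≤ |x| + |t| := abs_sub x t
    have h2 : |x| ≤ |a| + |x - a| := by
      have := abs_add_le a (x - a); simpa using this
    constructor
    · simpa [Metric.mem_closedBall, Real.dist_eq] using hx
    · simp only [Metric.mem_closedBall, Real.dist_eq, sub_zero]
      linarith
  have habs : ∀ t : ℝ, t ∈ Set.uIcc 0 a → |t| ≤ |a| + 1 := by
    intro t htm
    rw [Set.uIcc_of_le ha.le, Set.mem_Icc] at htm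
    rw [abs_le]
    constructor <;> [skip; skip] <;>
      · have := le_abs_self a; have := abs_nonneg a; linarith [htm.1, htm.2]
  -- pointwise bound on F'
  have hF'bound : ∀ x t : ℝ, |x - a| ≤ 1 → |t| ≤ |a| + 1 → ‖F' x t‖ ≤ C := by
    intro x t hx ht
    have h1 : ‖F' x t‖ ≤ ‖fderiv ℝ D (x, x - t)‖ * ‖((1:ℝ), (1:ℝ))‖ :=
      (fderiv ℝ D (x, x - t)).le_opNorm _
    have h2 : ‖((1:ℝ), (1:ℝ))‖ = 1 := by simp [Prod.norm_def]
    have h3 := hC _ (hmemK x t hx ht)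
    rw [h2, mul_one] at h1
    linarith
  -- Step C : derivative of x ↦ ∫ s in 0..a, E x s
  have hF'acont : Continuous fun s => F' a s :=
    Continuous.clm_apply ((hD.continuous_fderiv one_ne_zero).comp (hmap a)) continuous_const
  obtain ⟨-, hF1⟩ :=
    intervalIntegral.hasDerivAt_integral_of_dominated_loc_of_deriv_le
      (μ := MeasureTheory.volume) (F := E) (F' := F') (x₀ := a) (a := 0) (b := a) (bound := fun _ => C)
      (Metric.ball_mem_nhds a one_pos)
      (Filter.Eventually.of_forall fun x => ((hEcont x).aestronglyMeasurable))
      ((hEcont a).intervalIntegrable 0 a)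
      (hF'acont.aestronglyMeasurable)
      (Filter.Eventually.of_forall (fun t ht x hx => by
        refine hF'bound x t (le_of_lt ?_) (habs t (Set.uIoc_subset_uIcc ht))
        simpa [Real.dist_eq] using hx))
      (intervalIntegrable_const)
      (Filter.Eventually.of_forall (fun t _ x _ => hEderiv x t))
  -- Step D : derivative of x ↦ ∫ s in a..x, E a s
  have hG2 : HasDerivAt (fun x => ∫ s in a..x, E a s) (E a a) a :=
    intervalIntegral.integral_hasDerivAt_right ((hEcont a).intervalIntegrable (μ := MeasureTheory.volume) a a)
      ((hEcont a).stronglyMeasurableAtFilter MeasureTheory.volume (nhds a)) (hEcont a).continuousAt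
  -- Step E : the remainder term is o(x - a)
  have hD2 : HasDerivAt (fun x => ∫ s in a..x, (E x s - E a s)) 0 a := by
    rw [hasDerivAt_iff_isLittleO]
    simp only [intervalIntegral.integral_same, sub_zero, smul_zero, sub_zero]
    rw [Asymptotics.isLittleO_iff]
    intro ε hε
    have hr : 0 < min 1 (ε / (C + 1)) := lt_min one_pos (by positivity)
    filter_upwards [Metric.ball_mem_nhds a hr] with x hx
    rw [Metric.mem_ball, Real.dist_eq] at hx
    have hx1 : |x - a| ≤ 1 := le_of_lt (lt_of_lt_of_le hx (min_le_left _ _))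
    have hx2 : |x - a| ≤ ε / (C + 1) := le_of_lt (lt_of_lt_of_le hx (min_le_right _ _))
    have key : ∀ s ∈ Set.uIoc a x, ‖E x s - E a s‖ ≤ C * |x - a| := by
      intro s hs
      have hs' : |s - a| ≤ |x - a| := by
        have hsm := Set.uIoc_subset_uIcc hs
        rw [Set.mem_uIcc] at hsm
        rw [abs_le]
        rcases hsm with ⟨h1, h2⟩ | ⟨h1, h2⟩ <;>
          constructor <;> linarith [le_abs_self (x - a), neg_abs_le (x - a)]
      have hsa : |s| ≤ |a| + 1 := by
        have := abs_add_le a (s - a); simp at this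
        linarith
      have hm1' : ((x, x - s) : ℝ × ℝ) ∈ K := hmemK x s hx1 hsa
      have hm2' : ((a, a - s) : ℝ × ℝ) ∈ K := hmemK a s (by simp) hsa
      have hlip := hKconv.norm_image_sub_le_of_norm_fderiv_le
        (fun p _ => hD.differentiable one_ne_zero p) hC hm2' hm1'
      have hnorm : ‖((x, x - s) : ℝ × ℝ) - (a, a - s)‖ = |x - a| := by
        simp [Prod.norm_def, Real.norm_eq_abs]
      rw [hnorm] at hlip
      simpa [hE] using hlip
    have hbnd := intervalIntegral.norm_integral_le_of_norm_le_const key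
    have hCa : 0 ≤ C * |x - a| := mul_nonneg hC0 (abs_nonneg _)
    calc ‖∫ s in a..x, (E x s - E a s)‖ ≤ C * |x - a| * |x - a| := hbnd
      _ ≤ C * (ε / (C + 1)) * |x - a| := by
          apply mul_le_mul_of_nonneg_right _ (abs_nonneg _)
          exact mul_le_mul_of_nonneg_left hx2 hC0
      _ ≤ ε * |x - a| := by
          apply mul_le_mul_of_nonneg_right _ (abs_nonneg _)
          rw [div_eq_mul_inv, ← mul_assoc]
          rw [mul_comm C ε, mul_assoc]
          nth_rewrite 2 [← mul_one ε]
          apply mul_le_mul_of_nonneg_left _ (le_of_lt hε)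
          rw [mul_inv_le_iff₀ (by linarith)]
          linarith
      _ = ε * ‖x - a‖ := by rw [Real.norm_eq_abs]
  -- Step F : decomposition of the target function
  have heq : (fun x => ∫ δ in (0:ℝ)..x, D (x, δ)) =
      fun x => (∫ s in (0:ℝ)..a, E x s) + (∫ s in a..x, E a s)
        + (∫ s in a..x, (E x s - E a s)) := by
    funext x
    have h1 : (∫ δ in (0:ℝ)..x, D (x, δ)) = ∫ s in (0:ℝ)..x, E x s := by
      rw [hE]
      rw [show (∫ s in (0:ℝ)..x, D (x, x - s)) = ∫ s in (0:ℝ)..x, (fun δ => D (x, δ)) (x - s)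
        from rfl]
      rw [intervalIntegral.integral_comp_sub_left (fun δ => D (x, δ)) x]
      simp
    have h2 : (∫ s in a..x, E a s) + (∫ s in a..x, (E x s - E a s)) = ∫ s in a..x, E x s := by
      rw [← intervalIntegral.integral_add ((hEcont a).intervalIntegrable a x)
        (g := fun s => E x s - E a s)
        (((hEcont x).sub (hEcont a)).intervalIntegrable a x)]
      simp
    have h3 : (∫ s in (0:ℝ)..a, E x s) + (∫ s in a..x, E x s) = ∫ s in (0:ℝ)..x, E x s :=
      intervalIntegral.integral_add_adjacent_intervals ((hEcont x).intervalIntegrable 0 a)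
        ((hEcont x).intervalIntegrable a x)
    rw [h1, add_assoc, h2, h3]
  -- value of the derivative
  have hval : (∫ s in (0:ℝ)..a, F' a s) = -∫ δ in (0:ℝ)..a, m1 (a, δ) * D (a, δ) := by
    have hcongr : ∀ s ∈ Set.uIcc (0:ℝ) a, F' a s = -(m1 (a, a - s) * D (a, a - s)) := by
      intro s hs
      rw [Set.uIcc_of_le ha.le, Set.mem_Icc] at hs
      have hsplit : fderiv ℝ D (a, a - s) (1, 1)
          = fderiv ℝ D (a, a - s) (1, 0) + fderiv ℝ D (a, a - s) (0, 1) := by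
        rw [← map_add]
        norm_num
      have := hpde a (a - s) ha.le (by linarith [hs.2]) (by linarith [hs.1])
      rw [hF']
      simp only []
      rw [hsplit, this]
      ring
    rw [intervalIntegral.integral_congr hcongr, intervalIntegral.integral_neg]
    congr 1
    rw [show (∫ s in (0:ℝ)..a, m1 (a, a - s) * D (a, a - s))
        = ∫ s in (0:ℝ)..a, (fun δ => m1 (a, δ) * D (a, δ)) (a - s) from rfl]
    rw [intervalIntegral.integral_comp_sub_left (fun δ => m1 (a, δ) * D (a, δ)) a]
    simp
  have hEaa : E a a = i a * S a := by
    rw [hE]; simp only [sub_self]; exact hinit a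
  have hfinal := (hF1.add hG2).add hD2
  rw [hval, hEaa] at hfinal
  rw [heq]
  exact hfinal.congr_deriv (by ring)
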